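/- Let W be a 3-dimensional linear subspace of ℝ⁷ that is closed under the cross product determined by φ₀. Then the restriction of φ₀ to W is 2-nondegenerate: for any linearly independent w₁, w₂ ∈ W there exists w ∈ W with φ₀(w₁, w₂, w) ≠ 0; in particular W ∩ W_I^{⊥,2} = {0}, i.e. W is 2-multisymplectic. -/

import Mathlib

open Module

/-- The exterior 3-form `dxᵃ ∧ dxᵇ ∧ dxᶜ` on `ℝ⁷`. -/
noncomputable def dx3 (a b c : Fin 7) : (Fin 7 → ℝ) [⋀^Fin 3]→ₗ[ℝ] ℝ :=
  (Matrix.detRowAlternating : (Fin 3 → ℝ) [⋀^Fin 3]→ₗ[ℝ] ℝ).compLinearMap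
    (LinearMap.funLeft ℝ ℝ ![a, b, c])

/-- The standard `G₂` 3-form
`φ₀ = dx¹²³ + dx¹⁴⁵ + dx¹⁶⁷ + dx²⁴⁶ − dx²⁵⁷ − dx³⁴⁷ − dx³⁵⁶` on `ℝ⁷`
(with indices shifted to `0, …, 6`). -/
noncomputable def phi0 : (Fin 7 → ℝ) [⋀^Fin 3]→ₗ[ℝ] ℝ :=
  dx3 0 1 2 + dx3 0 3 4 + dx3 0 5 6 + dx3 1 3 5 - dx3 1 4 6 - dx3 2 3 6 - dx3 2 4 5

/-- The Type-I 1st orthogonal complement of `W ⊆ ℝ⁷` with respect to `φ₀`. -/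
def WIperp1 (W : Submodule ℝ (Fin 7 → ℝ)) : Set (Fin 7 → ℝ) :=
  {v | ∀ w ∈ W, ∀ u : Fin 7 → ℝ, phi0 ![v, w, u] = 0}

/-- The Type-I 2nd orthogonal complement of `W ⊆ ℝ⁷` with respect to `φ₀`. -/
def WIperp2 (W : Submodule ℝ (Fin 7 → ℝ)) : Set (Fin 7 → ℝ) :=
  {v | ∀ w₁ ∈ W, ∀ w₂ ∈ W, phi0 ![v, w₁, w₂] = 0}

/-- `U` is closed under the cross product determined by `φ₀`: for all `u, v ∈ U`
and every `z` orthogonal to `U` (w.r.t. the standard inner product),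
`φ₀ (u, v, z) = 0`, i.e. `u × v ∈ U`. -/
def CrossClosed (U : Submodule ℝ (Fin 7 → ℝ)) : Prop :=
  ∀ u ∈ U, ∀ v ∈ U, ∀ z : Fin 7 → ℝ, (∀ x ∈ U, ∑ i, z i * x i = 0) → phi0 ![u, v, z] = 0

set_option maxHeartbeats 1000000

lemma dx3_apply (a b c : Fin 7) (u v w : Fin 7 → ℝ) :
    dx3 a b c ![u, v, w] = u a * v b * w c - u a * v c * w b - u b * v a * w c
      + u b * v c * w a + u c * v a * w b - u c * v b * w a := by
  have h : dx3 a b c ![u, v, w]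
      = Matrix.det (Matrix.of fun i j => ![u, v, w] i (![a, b, c] j)) := rfl
  rw [h, Matrix.det_fin_three]
  simp [Matrix.of_apply]

/-- The cross product on `ℝ⁷` determined by `φ₀`. -/
def cross7 (u v : Fin 7 → ℝ) : Fin 7 → ℝ
  | 0 => u 1*v 2 - u 2*v 1 + u 3*v 4 - u 4*v 3 + u 5*v 6 - u 6*v 5
  | 1 => u 2*v 0 - u 0*v 2 + u 3*v 5 - u 5*v 3 - u 4*v 6 + u 6*v 4
  | 2 => u 0*v 1 - u 1*v 0 - u 3*v 6 + u 6*v 3 - u 4*v 5 + u 5*v 4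
  | 3 => u 4*v 0 - u 0*v 4 + u 5*v 1 - u 1*v 5 - u 6*v 2 + u 2*v 6
  | 4 => u 0*v 3 - u 3*v 0 - u 6*v 1 + u 1*v 6 - u 5*v 2 + u 2*v 5
  | 5 => u 6*v 0 - u 0*v 6 + u 1*v 3 - u 3*v 1 - u 2*v 4 + u 4*v 2
  | 6 => u 0*v 5 - u 5*v 0 - u 1*v 4 + u 4*v 1 - u 2*v 3 + u 3*v 2

lemma phi0_apply (u v w : Fin 7 → ℝ) :
    phi0 ![u, v, w] = ∑ i, cross7 u v i * w i := by
  simp only [phi0, AlternatingMap.sub_apply, AlternatingMap.add_apply, dx3_apply,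
    Fin.sum_univ_seven, cross7]
  ring

lemma lagrange7 (u v : Fin 7 → ℝ) :
    ∑ i, cross7 u v i * cross7 u v i
      = (∑ i, u i * u i) * (∑ i, v i * v i) - (∑ i, u i * v i) ^ 2 := by
  simp only [Fin.sum_univ_seven, cross7]
  ring

/-- if `W` is a 3-dimensional subspace of `ℝ⁷` closed under the cross
product determined by `φ₀`, then `φ₀|_W` is 2-nondegenerate (every linearly independent
pair `w₁, w₂ ∈ W` pairs nontrivially with some `w ∈ W`); in particular
`W ∩ W_I^{⊥,2} = {0}`, i.e. `W` is 2-multisymplectic. -/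
theorem g2_dim_three_cross_closed_multisymplectic (W : Submodule ℝ (Fin 7 → ℝ))
    (hW : Module.finrank ℝ W = 3) (hclosed : CrossClosed W) :
    (∀ w₁ w₂ : Fin 7 → ℝ, w₁ ∈ W → w₂ ∈ W → LinearIndependent ℝ ![w₁, w₂] →
      ∃ w ∈ W, phi0 ![w₁, w₂, w] ≠ 0) ∧
    (W : Set (Fin 7 → ℝ)) ∩ WIperp2 W = {0} := by
  have key : ∀ w₁ w₂ : Fin 7 → ℝ, w₁ ∈ W → w₂ ∈ W → LinearIndependent ℝ ![w₁, w₂] →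
      ∃ w ∈ W, phi0 ![w₁, w₂, w] ≠ 0 := by
    intro w₁ w₂ h₁ h₂ hind
    set c : Fin 7 → ℝ := cross7 w₁ w₂ with hc
    -- w₁ ≠ 0
    have hw1ne : w₁ ≠ 0 := by
      have := hind.ne_zero 0
      simpa using this
    have hnn : ∀ i ∈ Finset.univ, (0:ℝ) ≤ w₁ i * w₁ i := fun i _ => mul_self_nonneg _
    have ha : 0 < ∑ i, w₁ i * w₁ i := by
      rcases (Finset.sum_nonneg hnn).lt_or_eq with h | h
      · exact h
      · exfalso
        apply hw1ne
        funext i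
        exact mul_self_eq_zero.mp
          ((Finset.sum_eq_zero_iff_of_nonneg hnn).mp h.symm i (Finset.mem_univ i))
    -- ∑ c i * c i > 0
    have hccnn : ∀ i ∈ Finset.univ, (0:ℝ) ≤ c i * c i := fun i _ => mul_self_nonneg _
    have hcc : 0 < ∑ i, c i * c i := by
      rcases (Finset.sum_nonneg hccnn).lt_or_eq with h | h
      · exact h
      · exfalso
        have hlag : (∑ i, w₁ i * w₁ i) * (∑ i, w₂ i * w₂ i) - (∑ i, w₁ i * w₂ i) ^ 2 = 0 := by
          rw [← lagrange7, ← h]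
        have key2 : ∑ i, ((∑ j, w₁ j * w₁ j) * w₂ i - (∑ j, w₁ j * w₂ j) * w₁ i)
              * ((∑ j, w₁ j * w₁ j) * w₂ i - (∑ j, w₁ j * w₂ j) * w₁ i)
            = (∑ j, w₁ j * w₁ j) *
              ((∑ j, w₁ j * w₁ j) * (∑ j, w₂ j * w₂ j) - (∑ j, w₁ j * w₂ j) ^ 2) := by
          simp only [Fin.sum_univ_seven]
          ring
        rw [hlag, mul_zero] at key2
        have hz : ∀ i, (∑ j, w₁ j * w₁ j) * w₂ i - (∑ j, w₁ j * w₂ j) * w₁ i = 0 := by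
          intro i
          exact mul_self_eq_zero.mp
            ((Finset.sum_eq_zero_iff_of_nonneg
              (fun i _ => mul_self_nonneg _)).mp key2 i (Finset.mem_univ i))
        have hlin : (-(∑ j, w₁ j * w₂ j)) • w₁ + (∑ j, w₁ j * w₁ j) • w₂ = 0 := by
          funext i
          have := hz i
          simp only [Pi.add_apply, Pi.smul_apply, smul_eq_mul, Pi.zero_apply]
          linarith
        obtain ⟨_, ht⟩ := LinearIndependent.pair_iff.mp hind _ _ hlin
        exact ha.ne' ht
    -- orthogonal projection of c onto W
    let e : EuclideanSpace ℝ (Fin 7) ≃ₗ[ℝ] (Fin 7 → ℝ) := WithLp.linearEquiv 2 ℝ (Fin 7 → ℝ)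
    let W' : Submodule ℝ (EuclideanSpace ℝ (Fin 7)) := W.comap e.toLinearMap
    haveI : FiniteDimensional ℝ W' := FiniteDimensional.finiteDimensional_submodule W'
    let c' : EuclideanSpace ℝ (Fin 7) := e.symm c
    let p : EuclideanSpace ℝ (Fin 7) := (W'.orthogonalProjection c' : EuclideanSpace ℝ (Fin 7))
    have hpW' : p ∈ W' := (W'.orthogonalProjection c').2
    have hq : c' - p ∈ W'ᗮ := W'.sub_starProjection_mem_orthogonal c'
    have hpfun : e p ∈ W := hpW'
    -- the orthogonality hypothesis for hclosed
    have hzorth : ∀ x ∈ W, ∑ i, (c i - e p i) * x i = 0 := by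
      intro x hx
      have hx' : e.symm x ∈ W' := by
        simp only [W', Submodule.mem_comap]
        simpa using hx
      have hinner := (Submodule.mem_orthogonal _ _).mp hq (e.symm x) hx'
      rw [PiLp.inner_apply] at hinner
      simp only [RCLike.inner_apply, conj_trivial] at hinner
      rw [← hinner]
      apply Finset.sum_congr rfl
      intro i _
      have h1 : (e.symm x) i = x i := rfl
      have h2 : (c' - p) i = c i - e p i := rfl
      rw [h1, h2]
    have hclosed0 : phi0 ![w₁, w₂, fun i => c i - e p i] = 0 :=
      hclosed w₁ h₁ w₂ h₂ _ hzorth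
    rw [phi0_apply] at hclosed0
    refine ⟨e p, hpfun, ?_⟩
    rw [phi0_apply]
    have : ∑ i, c i * e p i = ∑ i, c i * c i := by
      have hsplit : ∑ i, c i * (c i - e p i) = 0 := by
        rw [← hclosed0]
      have : ∑ i, c i * c i - ∑ i, c i * e p i = 0 := by
        rw [← Finset.sum_sub_distrib, ← hsplit]
        apply Finset.sum_congr rfl
        intro i _
        ring
      linarith
    rw [this]
    exact hcc.ne'
  refine ⟨key, ?_⟩
  apply Set.eq_singleton_iff_unique_mem.mpr
  constructor
  · refine ⟨W.zero_mem, ?_⟩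
    intro w₁ _ w₂ _
    rw [phi0_apply]
    simp [cross7, Fin.sum_univ_seven]
  · rintro v ⟨hvW, hvperp⟩
    by_contra hv0
    have hspan : Submodule.span ℝ {v} < W := by
      refine lt_of_le_of_ne ((Submodule.span_singleton_le_iff_mem _ _).mpr hvW) ?_
      intro heq
      have h1 : finrank ℝ (Submodule.span ℝ {v}) = 1 := finrank_span_singleton hv0
      rw [heq, hW] at h1
      norm_num at h1
    obtain ⟨w₂, hw₂W, hw₂⟩ := SetLike.exists_of_lt hspan
    have hind : LinearIndependent ℝ ![v, w₂] := by
      rw [linearIndependent_fin2]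
      constructor
      · intro h
        apply hw₂
        rw [show w₂ = (![v, w₂] 1 : Fin 7 → ℝ) from rfl, h]
        exact Submodule.zero_mem _
      · intro a hav
        by_cases ha : a = 0
        · apply hv0
          rw [show v = (![v, w₂] 0 : Fin 7 → ℝ) from rfl, ← hav, ha, zero_smul]
        · apply hw₂
          have : w₂ = a⁻¹ • v := by
            have : a • w₂ = v := hav
            rw [← this, smul_smul, inv_mul_cancel₀ ha, one_smul]
          rw [this]
          exact Submodule.smul_mem _ _ (Submodule.mem_span_singleton_self v)
    obtain ⟨w, hwW, hne⟩ := key v w₂ hvW hw₂W hind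
    exact hne (hvperp w₂ hw₂W w hwW)
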